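/- Every Tinhofer graph is refinable: if Tinhofer's individualization-refinement algorithm gives the correct isomorphism answer on input (G, H) for every graph H and all possible choices of individualized vertices, then the stable partition Π_G of G equals the orbit partition of the automorphism group Aut(G). -/

import Mathlib

namespace ColorRef

variable {V W : Type}

/-- `crRel G c i u v` means vertices `u` and `v` get the same color in round `i`
of color refinement on `G` with initial coloring `c`. -/
def crRel (G : SimpleGraph V) {α : Type} (c : V → α) : ℕ → V → V → Prop
  | 0 => fun u v => c u = c v
  | (i + 1) => fun u v => crRel G c i u v ∧
      ∀ w : V, {a : V | G.Adj u a ∧ crRel G c i a w}.ncard =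
               {a : V | G.Adj v a ∧ crRel G c i a w}.ncard

/-- `u` and `v` get the same color in the stable coloring. -/
def stableRel (G : SimpleGraph V) {α : Type} (c : V → α) (u v : V) : Prop :=
  ∀ i : ℕ, crRel G c i u v

/-- `X` is a cell of the stable partition of `(G, c)`. -/
def IsCell (G : SimpleGraph V) {α : Type} (c : V → α) (X : Set V) : Prop :=
  ∃ u : V, X = {v : V | stableRel G c u v}

/-- The multisets of round-`i` colors on the two sides of the disjoint union `G ⊕g H`
coincide for every `i`, i.e. color refinement does not distinguish `G` and `H`. -/
def crIndist (G : SimpleGraph V) (cG : V → ℕ) (H : SimpleGraph W) (cH : W → ℕ) : Prop :=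
  ∀ (i : ℕ) (w : V ⊕ W),
    {u : V | crRel (G ⊕g H) (Sum.elim cG cH) i (Sum.inl u) w}.ncard =
    {v : W | crRel (G ⊕g H) (Sum.elim cG cH) i (Sum.inr v) w}.ncard

/-- `G` (with coloring `cG`) is amenable: any finite colored graph `H` that color
refinement fails to distinguish from `G` is color-preservingly isomorphic to `G`. -/
def Amenable (G : SimpleGraph V) (cG : V → ℕ) : Prop :=
  ∀ (W : Type) (_ : Fintype W) (H : SimpleGraph W) (cH : W → ℕ),
    crIndist G cG H cH → ∃ φ : G ≃g H, ∀ v : V, cH (φ v) = cG v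

/-! ### Induced subgraphs on cells and between cells -/

def CellEmpty (G : SimpleGraph V) (X : Set V) : Prop := ∀ u ∈ X, ∀ v ∈ X, ¬ G.Adj u v

def CellComplete (G : SimpleGraph V) (X : Set V) : Prop :=
  ∀ u ∈ X, ∀ v ∈ X, u ≠ v → G.Adj u v

/-- `G[X]` is a perfect matching `mK₂` on `X`. -/
def CellMatching (G : SimpleGraph V) (X : Set V) : Prop :=
  ∀ u ∈ X, {v : V | v ∈ X ∧ G.Adj u v}.ncard = 1

/-- `G[X]` is the complement of a perfect matching on `X`. -/
def CellCoMatching (G : SimpleGraph V) (X : Set V) : Prop :=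
  ∀ u ∈ X, {v : V | v ∈ X ∧ v ≠ u ∧ ¬ G.Adj u v}.ncard = 1

/-- `G[X]` is the 5-cycle (a 2-regular graph on 5 vertices). -/
def CellC5 (G : SimpleGraph V) (X : Set V) : Prop :=
  X.ncard = 5 ∧ ∀ u ∈ X, {v : V | v ∈ X ∧ G.Adj u v}.ncard = 2

/-- Condition A. -/
def CondA (G : SimpleGraph V) {α : Type} (c : V → α) : Prop :=
  ∀ X : Set V, IsCell G c X →
    CellEmpty G X ∨ CellComplete G X ∨ CellMatching G X ∨ CellCoMatching G X ∨ CellC5 G X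

def BipEmpty (G : SimpleGraph V) (X Y : Set V) : Prop := ∀ u ∈ X, ∀ v ∈ Y, ¬ G.Adj u v

def BipComplete (G : SimpleGraph V) (X Y : Set V) : Prop := ∀ u ∈ X, ∀ v ∈ Y, G.Adj u v

/-- `G[X,Y]` is a disjoint union of stars `sK_{1,t}` with centers `X` and leaves `Y`. -/
def BipStars (G : SimpleGraph V) (X Y : Set V) : Prop :=
  (∀ v ∈ Y, {u : V | u ∈ X ∧ G.Adj u v}.ncard = 1) ∧
  (∃ t : ℕ, ∀ u ∈ X, {v : V | v ∈ Y ∧ G.Adj u v}.ncard = t)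

/-- `G[X,Y]` is the bipartite complement of a disjoint union of stars with centers `X`. -/
def BipCoStars (G : SimpleGraph V) (X Y : Set V) : Prop :=
  (∀ v ∈ Y, {u : V | u ∈ X ∧ ¬ G.Adj u v}.ncard = 1) ∧
  (∃ t : ℕ, ∀ u ∈ X, {v : V | v ∈ Y ∧ ¬ G.Adj u v}.ncard = t)

/-- Condition B. -/
def CondB (G : SimpleGraph V) {α : Type} (c : V → α) : Prop :=
  ∀ X Y : Set V, IsCell G c X → IsCell G c Y → X ≠ Y →
    BipEmpty G X Y ∨ BipComplete G X Y ∨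
    BipStars G X Y ∨ BipStars G Y X ∨ BipCoStars G X Y ∨ BipCoStars G Y X

/-- A cell is heterogeneous if the graph it induces is neither complete nor empty. -/
def Hetero (G : SimpleGraph V) (X : Set V) : Prop :=
  ¬ CellEmpty G X ∧ ¬ CellComplete G X

/-- `{X, Y}` is an anisotropic edge of the cell graph. -/
def AnisoEdge (G : SimpleGraph V) {α : Type} (c : V → α) (X Y : Set V) : Prop :=
  IsCell G c X ∧ IsCell G c Y ∧ X ≠ Y ∧ ¬ BipEmpty G X Y ∧ ¬ BipComplete G X Y

/-- An anisotropic path in the cell graph, given as the list of its cells. -/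
def AnisoPath (G : SimpleGraph V) {α : Type} (c : V → α) (L : List (Set V)) : Prop :=
  (∀ X ∈ L, IsCell G c X) ∧ L.Nodup ∧ L.Chain' (AnisoEdge G c)

/-- Condition C: no uniform anisotropic path connects two heterogeneous cells. -/
def CondC (G : SimpleGraph V) {α : Type} (c : V → α) : Prop :=
  ¬ ∃ (X Y : Set V) (L : List (Set V)) (k : ℕ),
      AnisoPath G c (X :: (L ++ [Y])) ∧
      (∀ Z ∈ X :: (L ++ [Y]), Z.ncard = k) ∧
      Hetero G X ∧ Hetero G Y

/-- Condition D: the cell graph has no uniform anisotropic cycle. -/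
def CondD (G : SimpleGraph V) {α : Type} (c : V → α) : Prop :=
  ¬ ∃ (X : Set V) (L : List (Set V)) (k : ℕ),
      3 ≤ (X :: L).length ∧
      AnisoPath G c (X :: L) ∧
      List.Chain' (AnisoEdge G c) ((X :: L) ++ [X]) ∧
      (∀ Z ∈ X :: L, Z.ncard = k)

/-- Condition E: no anisotropic path `X Y₁ … Y_l Z` with `|X| < |Y₁| = … = |Y_l| > |Z|`
and no anisotropic cycle `X Y₁ … Y_l X` with `|X| < |Y₁| = … = |Y_l|`. -/
def CondE (G : SimpleGraph V) {α : Type} (c : V → α) : Prop :=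
  (¬ ∃ (X Z : Set V) (Ys : List (Set V)) (k : ℕ),
      Ys ≠ [] ∧
      AnisoPath G c (X :: (Ys ++ [Z])) ∧
      (∀ Y ∈ Ys, Y.ncard = k) ∧ X.ncard < k ∧ Z.ncard < k) ∧
  (¬ ∃ (X : Set V) (Ys : List (Set V)) (k : ℕ),
      2 ≤ Ys.length ∧
      AnisoPath G c (X :: Ys) ∧
      List.Chain' (AnisoEdge G c) ((X :: Ys) ++ [X]) ∧
      (∀ Y ∈ Ys, Y.ncard = k) ∧ X.ncard < k)

/-- Condition F: no anisotropic path `X Y₁ … Y_l` with `|X| < |Y₁| = … = |Y_l|`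
whose last cell `Y_l` is heterogeneous. -/
def CondF (G : SimpleGraph V) {α : Type} (c : V → α) : Prop :=
  ¬ ∃ (X : Set V) (Ys : List (Set V)) (Yl : Set V) (k : ℕ),
      Ys ≠ [] ∧
      AnisoPath G c (X :: Ys) ∧
      (∀ Y ∈ Ys, Y.ncard = k) ∧ X.ncard < k ∧
      Ys.getLast? = some Yl ∧ Hetero G Yl

/-- The type of cells of the stable partition. -/
def Cell (G : SimpleGraph V) {α : Type} (c : V → α) : Type := {X : Set V // IsCell G c X}

/-- The graph on the cells of `Π_G` formed by the anisotropic edges of the cell graph;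
its connected components are the anisotropic components of `C(G)`. -/
def anisoGraph (G : SimpleGraph V) {α : Type} (c : V → α) : SimpleGraph (Cell G c) where
  Adj A B := AnisoEdge G c A.val B.val
  symm := by
    constructor
    rintro A B ⟨h1, h2, h3, h4, h5⟩
    refine ⟨h2, h1, Ne.symm h3, fun h => h4 ?_, fun h => h5 ?_⟩
    · exact fun u hu v hv hadj => h v hv u hu hadj.symm
    · exact fun u hu v hv => (h v hv u hu).symm
  loopless := ⟨fun A h => h.2.2.1 rfl⟩

/-- Condition G: every anisotropic component is a tree, and rooting it at any cell `R`
of minimum cardinality in its component, `|X| ≤ |Y|` along edges directed away from `R`. -/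
def CondG (G : SimpleGraph V) {α : Type} (c : V → α) : Prop :=
  (anisoGraph G c).IsAcyclic ∧
  ∀ R X Y : Cell G c,
    (∀ Z : Cell G c, (anisoGraph G c).Reachable R Z → R.val.ncard ≤ Z.val.ncard) →
    (anisoGraph G c).Reachable R X →
    (anisoGraph G c).Adj X Y →
    (anisoGraph G c).dist R Y = (anisoGraph G c).dist R X + 1 →
    X.val.ncard ≤ Y.val.ncard

/-- Condition H: every anisotropic component contains at most one heterogeneous cell,
and such a cell has minimum cardinality within its component. -/
def CondH (G : SimpleGraph V) {α : Type} (c : V → α) : Prop :=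
  (∀ X Y : Cell G c, Hetero G X.val → Hetero G Y.val →
      (anisoGraph G c).Reachable X Y → X = Y) ∧
  (∀ X Z : Cell G c, Hetero G X.val →
      (anisoGraph G c).Reachable X Z → X.val.ncard ≤ Z.val.ncard)

/-! ### Matrices, fractional automorphisms and compactness -/

open Classical in
/-- The real adjacency matrix of `G`. -/
noncomputable def adjMat (G : SimpleGraph V) : Matrix V V ℝ :=
  Matrix.of fun u v => if G.Adj u v then (1 : ℝ) else 0

open Classical in
/-- The permutation matrix of a permutation `σ`. -/
noncomputable def permMat (σ : Equiv.Perm V) : Matrix V V ℝ :=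
  Matrix.of fun i j => if σ j = i then (1 : ℝ) else 0

def IsDoublyStochastic [Fintype V] (X : Matrix V V ℝ) : Prop :=
  (∀ i j, 0 ≤ X i j) ∧ (∀ i, ∑ j, X i j = 1) ∧ (∀ j, ∑ i, X i j = 1)

def IsAutomorphism (G : SimpleGraph V) (σ : Equiv.Perm V) : Prop :=
  ∀ u v : V, G.Adj (σ u) (σ v) ↔ G.Adj u v

/-- `X` is a convex combination of permutation matrices of automorphisms of `G`. -/
def IsConvexCombOfAut [Fintype V] (G : SimpleGraph V) (X : Matrix V V ℝ) : Prop :=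
  ∃ (s : Finset (Equiv.Perm V)) (w : Equiv.Perm V → ℝ),
    (∀ σ ∈ s, IsAutomorphism G σ) ∧ (∀ σ ∈ s, 0 ≤ w σ) ∧
    (∑ σ ∈ s, w σ) = 1 ∧ X = ∑ σ ∈ s, w σ • permMat σ

/-- `G` is compact: the polytope of fractional automorphisms of `G` is the convex hull
of the permutation matrices of automorphisms of `G`. -/
def CompactGraph [Fintype V] (G : SimpleGraph V) : Prop :=
  ∀ X : Matrix V V ℝ, IsDoublyStochastic X → adjMat G * X = X * adjMat G →
    IsConvexCombOfAut G X

/-! ### Equitable partitions, Godsil, Tinhofer, refinable, discrete, unigraphs -/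

/-- The partition given by the classes of the equivalence `r` is equitable. -/
def Equitable (G : SimpleGraph V) (r : V → V → Prop) : Prop :=
  ∀ u v w : V, r u v →
    {a : V | G.Adj u a ∧ r a w}.ncard = {a : V | G.Adj v a ∧ r a w}.ncard

/-- The partition given by `r` is the orbit partition of a subgroup of `Aut(G)`. -/
def IsOrbitPartition (G : SimpleGraph V) (r : V → V → Prop) : Prop :=
  ∃ S : Subgroup (Equiv.Perm V), (∀ σ ∈ S, IsAutomorphism G σ) ∧
    (∀ u v : V, r u v ↔ ∃ σ ∈ S, σ u = v)

/-- `G` is a Godsil graph. -/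
def Godsil (G : SimpleGraph V) : Prop :=
  ∀ r : V → V → Prop, Equivalence r → Equitable G r → IsOrbitPartition G r

open Classical in
/-- The coloring of the disjoint union after individualizing the pairs in `F`:
the `j`-th individualized pair gets fresh color `some j`, all other vertices keep
their (uniform) original color `none`. -/
noncomputable def tinColor (F : List (V × W)) : V ⊕ W → Option ℕ
  | Sum.inl u => F.findIdx? (fun p => decide (p.1 = u))
  | Sum.inr v => F.findIdx? (fun p => decide (p.2 = v))

/-- The stable coloring relation on `G ⊕g H` after individualizing the pairs in `F`. -/
def tinRel (G : SimpleGraph V) (H : SimpleGraph W) (F : List (V × W)) :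
    (V ⊕ W) → (V ⊕ W) → Prop :=
  stableRel (G ⊕g H) (tinColor F)

/-- The multisets of stable colors on the two sides agree after individualizing `F`. -/
def tinIndist (G : SimpleGraph V) (H : SimpleGraph W) (F : List (V × W)) : Prop :=
  ∀ w : V ⊕ W,
    {u : V | tinRel G H F (Sum.inl u) w}.ncard =
    {v : W | tinRel G H F (Sum.inr v) w}.ncard

/-- The pair `p` is a legal individualization choice at the stage reached after `F`. -/
def ValidStep (G : SimpleGraph V) (H : SimpleGraph W) (F : List (V × W)) (p : V × W) : Prop :=
  tinIndist G H F ∧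
  tinRel G H F (Sum.inl p.1) (Sum.inr p.2) ∧
  2 ≤ {u' : V | tinRel G H F (Sum.inl u') (Sum.inl p.1)}.ncard ∧
  2 ≤ {v' : W | tinRel G H F (Sum.inr v') (Sum.inr p.2)}.ncard

/-- `F` is a legal sequence of individualization choices of Tinhofer's algorithm. -/
def ValidRun (G : SimpleGraph V) (H : SimpleGraph W) (F : List (V × W)) : Prop :=
  ∀ j : Fin F.length, ValidStep G H (F.take j.val) (F.get j)

/-- After `F`, all stable color classes are singletons in `G` and in `H`. -/
def AllSingletons (G : SimpleGraph V) (H : SimpleGraph W) (F : List (V × W)) : Prop :=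
  (∀ u u' : V, tinRel G H F (Sum.inl u) (Sum.inl u') → u = u') ∧
  (∀ v v' : W, tinRel G H F (Sum.inr v) (Sum.inr v') → v = v')

/-- After `F`, Tinhofer's algorithm stops. -/
def TinTerminal (G : SimpleGraph V) (H : SimpleGraph W) (F : List (V × W)) : Prop :=
  ¬ tinIndist G H F ∨ AllSingletons G H F

/-- After `F`, Tinhofer's algorithm outputs "isomorphic": the color multisets agree,
all classes are singletons, and the color-matching map is an isomorphism. -/
def TinOutputIso (G : SimpleGraph V) (H : SimpleGraph W) (F : List (V × W)) : Prop :=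
  tinIndist G H F ∧ AllSingletons G H F ∧
  (∀ (u u' : V) (v v' : W), tinRel G H F (Sum.inl u) (Sum.inr v) →
     tinRel G H F (Sum.inl u') (Sum.inr v') → (G.Adj u u' ↔ H.Adj v v'))

/-- `G` is a Tinhofer graph: for every finite `H` and every legal complete run of
Tinhofer's individualization-refinement algorithm, the output is correct. -/
def Tinhofer (G : SimpleGraph V) : Prop :=
  ∀ (W : Type) (_ : Fintype W) (H : SimpleGraph W) (F : List (V × W)),
    ValidRun G H F → TinTerminal G H F →
    (TinOutputIso G H F ↔ Nonempty (G ≃g H))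

/-- `G` is refinable: its stable partition is the orbit partition of `Aut(G)`. -/
def Refinable (G : SimpleGraph V) : Prop :=
  ∀ u v : V, stableRel G (fun _ => (0 : ℕ)) u v ↔
    ∃ σ : Equiv.Perm V, IsAutomorphism G σ ∧ σ u = v

/-- `G` is discrete: the stable partition consists of singletons. -/
def Discrete (G : SimpleGraph V) : Prop :=
  ∀ u v : V, stableRel G (fun _ => (0 : ℕ)) u v → u = v

/-- `G` is a unigraph: it is determined up to isomorphism by its degree sequence. -/
def Unigraph (G : SimpleGraph V) : Prop :=
  ∀ (W : Type) (_ : Fintype W) (H : SimpleGraph W),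
    (∃ e : V ≃ W, ∀ v : V, {w : W | H.Adj (e v) w}.ncard = {u : V | G.Adj v u}.ncard) →
    Nonempty (G ≃g H)

/-! ### Concrete graphs -/

/-- The cycle graph on `n` vertices. -/
def cycleG (n : ℕ) : SimpleGraph (Fin n) :=
  SimpleGraph.fromRel (fun u v => (u.val + 1) % n = v.val)

/-- The Petersen graph as the Kneser graph `K(5,2)`. -/
def petersen : SimpleGraph {s : Finset (Fin 5) // s.card = 2} where
  Adj a b := Disjoint a.val b.val
  symm := ⟨fun _ _ h => h.symm⟩
  loopless := by
    constructor
    intro a h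
    have h' : Disjoint a.val a.val := h
    rw [disjoint_self] at h'
    have h2 := a.2
    rw [h'] at h2
    simp at h2

/-- The Johnson graph `J(n,2)`. -/
def johnson (n : ℕ) : SimpleGraph {s : Finset (Fin n) // s.card = 2} where
  Adj a b := (a.val ∩ b.val).card = 1
  symm := by
    constructor
    intro a b h
    have h' : (a.val ∩ b.val).card = 1 := h
    show (b.val ∩ a.val).card = 1
    rwa [Finset.inter_comm]
  loopless := by
    constructor
    intro a h
    have h' : (a.val ∩ a.val).card = 1 := h
    rw [Finset.inter_self, a.2] at h'
    omega

/-- The cell (as an element of the cell type) containing vertex `u`. -/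
def vcell (G : SimpleGraph V) {α : Type} (c : V → α) (u : V) : Cell G c :=
  ⟨{v : V | stableRel G c u v}, ⟨u, rfl⟩⟩

/-- `u` and `v` lie in cells of the same anisotropic component. -/
def SameAnisoComp (G : SimpleGraph V) {α : Type} (c : V → α) (u v : V) : Prop :=
  (anisoGraph G c).Reachable (vcell G c u) (vcell G c v)

section Equiv
variable {α β : Type} (G : SimpleGraph V) (c : V → α)

lemma crRel_refl : ∀ i u, crRel G c i u u
  | 0, _ => rfl
  | (i+1), u => ⟨crRel_refl i u, fun _ => rfl⟩

lemma crRel_symm : ∀ i, ∀ {u v}, crRel G c i u v → crRel G c i v u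
  | 0, _, _, h => h.symm
  | (i+1), _, _, h => ⟨crRel_symm i h.1, fun w => (h.2 w).symm⟩

lemma crRel_trans : ∀ i, ∀ {u v w}, crRel G c i u v → crRel G c i v w → crRel G c i u w
  | 0, _, _, _, h, h' => h.trans h'
  | (i+1), _, _, _, h, h' => ⟨crRel_trans i h.1 h'.1, fun w => (h.2 w).trans (h'.2 w)⟩

lemma crRel_equivalence (i : ℕ) : Equivalence (crRel G c i) :=
  ⟨crRel_refl G c i, crRel_symm G c i, crRel_trans G c i⟩

lemma stableRel_equivalence : Equivalence (stableRel G c) :=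
  ⟨fun u i => crRel_refl G c i u, fun h i => crRel_symm G c i (h i),
   fun h h' i => crRel_trans G c i (h i) (h' i)⟩

/-- class-invariance of counting sets -/
lemma setOf_and_rel_congr {r : V → V → Prop} (hr : Equivalence r) (P : V → Prop)
    {w w' : V} (hww' : r w w') : {a : V | P a ∧ r a w} = {a : V | P a ∧ r a w'} := by
  ext a
  exact and_congr_right fun _ => ⟨fun h => hr.trans h hww', fun h => hr.trans h (hr.symm hww')⟩

end Equiv

open Classical in
/-- key counting lemma: counts against a coarser equivalence agree -/
lemma count_coarse [Fintype V] {r r' : V → V → Prop}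
    (hr : Equivalence r) (hr' : Equivalence r')
    (hsub : ∀ {a b}, r' a b → r a b) (A B : Set V)
    (h : ∀ w', {a | a ∈ A ∧ r' a w'}.ncard = {a | a ∈ B ∧ r' a w'}.ncard)
    (w : V) : {a | a ∈ A ∧ r a w}.ncard = {a | a ∈ B ∧ r a w}.ncard := by
  classical
  set s' : Setoid V := ⟨r', hr'⟩ with hs'
  let rep : V → V := fun a => (Quotient.mk s' a).out
  have hrep : ∀ a, r' a (rep a) := fun a => hr'.symm (Quotient.mk_out a)
  have hconst : ∀ {a b}, r' a b → rep a = rep b := by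
    intro a b hab
    show (Quotient.mk s' a).out = (Quotient.mk s' b).out
    rw [Quotient.sound hab]
  have hidem : ∀ a, rep (rep a) = rep a := fun a => (hconst (hrep a)).symm
  set reps : Finset V := (Finset.univ.filter (fun a => r a w)).image rep with hreps
  have key : ∀ (C : Set V),
      {a | a ∈ C ∧ r a w}.ncard
        = ∑ w' ∈ reps, {a | a ∈ C ∧ r' a w'}.ncard := by
    intro C
    have hdisj : ∀ x ∈ reps, ∀ y ∈ reps, x ≠ y →
        Disjoint (Finset.univ.filter (fun a => a ∈ C ∧ r' a x))
                 (Finset.univ.filter (fun a => a ∈ C ∧ r' a y)) := by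
      intro x hx y hy hxy
      rw [Finset.disjoint_left]
      intro a ha ha'
      simp only [Finset.mem_filter] at ha ha'
      apply hxy
      obtain ⟨bx, _, hbx⟩ := Finset.mem_image.1 hx
      obtain ⟨by', _, hby⟩ := Finset.mem_image.1 hy
      rw [← hbx, ← hidem bx, hbx, ← hconst ha.2.2, ← hby, ← hidem by', hby, ← hconst ha'.2.2]
    have hset : Finset.univ.filter (fun a => a ∈ C ∧ r a w)
        = reps.biUnion (fun w' => Finset.univ.filter (fun a => a ∈ C ∧ r' a w')) := by
      ext a
      simp only [Finset.mem_filter, Finset.mem_univ, true_and, Finset.mem_biUnion]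
      constructor
      · rintro ⟨hC, hrw⟩
        refine ⟨rep a, ?_, hC, hrep a⟩
        exact Finset.mem_image.2 ⟨a, Finset.mem_filter.2 ⟨Finset.mem_univ _, hrw⟩, rfl⟩
      · rintro ⟨w', hw', hC, hr'a⟩
        obtain ⟨b, hb, hbw'⟩ := Finset.mem_image.1 hw'
        have hbw : r b w := (Finset.mem_filter.1 hb).2
        refine ⟨hC, hr.trans (hsub hr'a) ?_⟩
        rw [← hbw']
        exact hr.trans (hr.symm (hsub (hrep b))) hbw
    have h1 : {a | a ∈ C ∧ r a w}.ncard
        = (Finset.univ.filter (fun a => a ∈ C ∧ r a w)).card := by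
      rw [← Set.ncard_coe_finset]; congr 1; ext a; simp
    rw [h1, hset, Finset.card_biUnion hdisj]
    refine Finset.sum_congr rfl fun w' _ => ?_
    rw [← Set.ncard_coe_finset]; congr 1; ext a; simp
  rw [key A, key B]
  exact Finset.sum_congr rfl fun w' _ => h w'

/-- coarsening: refinement of initial colors gives refinement at every round -/
lemma crRel_coarsen [Fintype V] (G : SimpleGraph V) {α β : Type} {c : V → α} {c' : V → β}
    (hc : ∀ x y, c' x = c' y → c x = c y) :
    ∀ i {u v}, crRel G c' i u v → crRel G c i u v := by
  intro i
  induction i with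
  | zero => exact fun h => hc _ _ h
  | succ i ih =>
    rintro u v ⟨h1, h2⟩
    refine ⟨ih h1, fun w => ?_⟩
    exact count_coarse (crRel_equivalence G c i) (crRel_equivalence G c' i)
      (fun h => ih h) {a | G.Adj u a} {a | G.Adj v a} (fun w' => h2 w') w

lemma crRel_congr_color [Fintype V] (G : SimpleGraph V) {α β : Type} {c : V → α} {c' : V → β}
    (hc : ∀ x y, c x = c y ↔ c' x = c' y) (i : ℕ) (u v : V) :
    crRel G c i u v ↔ crRel G c' i u v :=
  ⟨fun h => crRel_coarsen G (fun x y h' => (hc x y).1 h') i h,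
   fun h => crRel_coarsen G (fun x y h' => (hc x y).2 h') i h⟩

/-- automorphism invariance -/
lemma crRel_aut (G : SimpleGraph V) {α : Type} (c : V → α) (σ : Equiv.Perm V)
    (hσ : ∀ u v : V, G.Adj (σ u) (σ v) ↔ G.Adj u v) (hc : ∀ x, c (σ x) = c x) :
    ∀ i, (∀ u v, crRel G c i u v ↔ crRel G c i (σ u) (σ v)) ∧ (∀ u, crRel G c i u (σ u)) := by
  intro i
  induction i with
  | zero =>
    refine ⟨fun u v => ?_, fun u => (hc u).symm⟩
    show c u = c v ↔ c (σ u) = c (σ v)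
    rw [hc, hc]
  | succ i ih =>
    have himg : ∀ (x : V) (w : V), {a : V | G.Adj (σ x) a ∧ crRel G c i a w}
        = σ '' {a : V | G.Adj x a ∧ crRel G c i a (σ.symm w)} := by
      intro x w
      ext a'
      simp only [Set.mem_image, Set.mem_setOf_eq]
      constructor
      · rintro ⟨hadj, hcr⟩
        refine ⟨σ.symm a', ⟨?_, ?_⟩, by simp⟩
        · rw [← hσ]; simpa using hadj
        · rw [ih.1]; simpa using hcr
      · rintro ⟨a, ⟨hadj, hcr⟩, rfl⟩
        refine ⟨(hσ _ _).2 hadj, ?_⟩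
        have := (ih.1 a (σ.symm w)).1 hcr
        simpa using this
    have hcount : ∀ (x : V) (w : V), {a : V | G.Adj (σ x) a ∧ crRel G c i a w}.ncard
        = {a : V | G.Adj x a ∧ crRel G c i a (σ.symm w)}.ncard := by
      intro x w; rw [himg, Set.ncard_image_of_injective _ σ.injective]
    constructor
    · intro u v
      constructor
      · rintro ⟨h1, h2⟩
        exact ⟨(ih.1 u v).1 h1, fun w => by rw [hcount, hcount]; exact h2 _⟩
      · rintro ⟨h1, h2⟩
        refine ⟨(ih.1 u v).2 h1, fun w => ?_⟩
        have := h2 (σ w)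
        rw [hcount, hcount] at this
        simpa using this
    · intro u
      refine ⟨ih.2 u, fun w => ?_⟩
      rw [hcount]
      congr 1
      exact setOf_and_rel_congr (crRel_equivalence G c i) _
        (crRel_symm G c i (by simpa using ih.2 (σ.symm w)))


/-! ### Stage 2: sum graph lemmas -/

lemma tinColor_nil (x : V ⊕ W) : tinColor ([] : List (V × W)) x = none := by
  cases x <;> simp [tinColor, List.findIdx?_nil]

lemma swap_aut (G : SimpleGraph V) :
    ∀ x y : V ⊕ V, (G ⊕g G).Adj (Equiv.sumComm V V x) (Equiv.sumComm V V y) ↔ (G ⊕g G).Adj x y := by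
  intro x y
  cases x <;> cases y <;> simp [SimpleGraph.sum_adj]

/-- `crRel` on the union relates each vertex with its mirror image, for any
coloring invariant under the swap. -/
lemma crRel_sum_swap (G : SimpleGraph V) {α : Type} (c : V ⊕ V → α)
    (hc : ∀ x, c (Equiv.sumComm V V x) = c x) (i : ℕ) (a : V) :
    crRel (G ⊕g G) c i (Sum.inl a) (Sum.inr a) :=
  (crRel_aut (G ⊕g G) c (Equiv.sumComm V V) (swap_aut G) hc i).2 (Sum.inl a)

lemma crRel_sum_inl [Fintype V] (G : SimpleGraph V) :
    ∀ (i : ℕ) (a b : V),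
      crRel (G ⊕g G) (fun _ => (0 : ℕ)) i (Sum.inl a) (Sum.inl b) ↔
      crRel G (fun _ => (0 : ℕ)) i a b := by
  intro i
  induction i with
  | zero => intro a b; exact ⟨fun _ => rfl, fun _ => rfl⟩
  | succ i ih =>
    intro a b
    have hswap : ∀ w0 : V, crRel (G ⊕g G) (fun _ => (0 : ℕ)) i (Sum.inl w0) (Sum.inr w0) :=
      crRel_sum_swap G (fun _ => (0:ℕ)) (fun _ => rfl) i
    have hset : ∀ (x : V) (w0 : V),
        {z : V ⊕ V | (G ⊕g G).Adj (Sum.inl x) z ∧ crRel (G ⊕g G) (fun _ => (0:ℕ)) i z (Sum.inl w0)}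
          = Sum.inl '' {a' : V | G.Adj x a' ∧ crRel G (fun _ => (0:ℕ)) i a' w0} := by
      intro x w0
      ext z
      cases z with
      | inl a' =>
        simp only [Set.mem_setOf_eq, SimpleGraph.sum_adj, Set.mem_image]
        constructor
        · rintro ⟨h1, h2⟩; exact ⟨a', ⟨h1, (ih a' w0).1 h2⟩, rfl⟩
        · rintro ⟨a'', ⟨h1, h2⟩, hz⟩
          cases hz
          exact ⟨h1, (ih a' w0).2 h2⟩
      | inr b' =>
        simp [SimpleGraph.sum_adj]
    have hcount : ∀ (x : V) (w0 : V),
        {z : V ⊕ V | (G ⊕g G).Adj (Sum.inl x) z ∧ crRel (G ⊕g G) (fun _ => (0:ℕ)) i z (Sum.inl w0)}.ncard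
        = {a' : V | G.Adj x a' ∧ crRel G (fun _ => (0:ℕ)) i a' w0}.ncard := by
      intro x w0; rw [hset, Set.ncard_image_of_injective _ Sum.inl_injective]
    have hinr : ∀ (x : V) (w0 : V),
        {z : V ⊕ V | (G ⊕g G).Adj (Sum.inl x) z ∧ crRel (G ⊕g G) (fun _ => (0:ℕ)) i z (Sum.inr w0)}
        = {z : V ⊕ V | (G ⊕g G).Adj (Sum.inl x) z ∧ crRel (G ⊕g G) (fun _ => (0:ℕ)) i z (Sum.inl w0)} := by
      intro x w0
      exact setOf_and_rel_congr (crRel_equivalence _ _ i) _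
        (crRel_symm _ _ i (hswap w0))
    constructor
    · rintro ⟨h1, h2⟩
      refine ⟨(ih a b).1 h1, fun w0 => ?_⟩
      have := h2 (Sum.inl w0)
      rwa [hcount, hcount] at this
    · rintro ⟨h1, h2⟩
      refine ⟨(ih a b).2 h1, fun w => ?_⟩
      cases w with
      | inl w0 => rw [hcount, hcount]; exact h2 w0
      | inr w0 => rw [hinr, hinr, hcount, hcount]; exact h2 w0

/-- tinColor [] agrees with the constant coloring -/
lemma tinRel_nil_congr [Fintype V] [Fintype W] (G : SimpleGraph V) (H : SimpleGraph W)
    (i : ℕ) (x y : V ⊕ W) :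
    crRel (G ⊕g H) (tinColor ([] : List (V × W))) i x y ↔
    crRel (G ⊕g H) (fun _ => (0 : ℕ)) i x y :=
  crRel_congr_color _ (fun x y => by simp [tinColor_nil]) i x y

/-! ### Stage 3: findIdx? machinery -/

lemma findIdx?_spec {γ : Type} : ∀ (l : List γ) (q : γ → Bool) (j : ℕ),
    List.findIdx? q l = some j → ∃ a, l[j]? = some a ∧ q a = true := by
  intro l
  induction l with
  | nil => intro q j h; simp [List.findIdx?_nil] at h
  | cons x xs ih =>
    intro q j h
    rw [List.findIdx?_cons] at h
    by_cases hx : q x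
    · simp only [hx, if_true] at h
      obtain rfl : (0 : ℕ) = j := Option.some.inj h
      exact ⟨x, by simp, hx⟩
    · simp only [hx, if_false] at h
      obtain ⟨k, hk, rfl⟩ := Option.map_eq_some_iff.1 h
      obtain ⟨a, ha, hqa⟩ := ih q k hk
      exact ⟨a, by simpa using ha, hqa⟩

lemma findIdx?_lt_length {γ : Type} {l : List γ} {q : γ → Bool} {j : ℕ}
    (h : List.findIdx? q l = some j) : j < l.length := by
  obtain ⟨a, ha, -⟩ := findIdx?_spec l q j h
  exact (List.getElem?_eq_some_iff.1 ha).1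

lemma findIdx?_append_single {γ : Type} (l : List γ) (p : γ) (q : γ → Bool) :
    l.findIdx? q = (List.findIdx? q (l ++ [p])).bind
      (fun j => if j < l.length then some j else none) := by
  rw [List.findIdx?_append]
  cases h : List.findIdx? q l with
  | some j =>
    have hj : j < l.length := findIdx?_lt_length h
    simp [hj]
  | none =>
    rw [List.findIdx?_cons]
    by_cases h1 : q p
    · simp [h1, List.findIdx?_nil]
    · simp [h1, List.findIdx?_nil]

lemma findIdx?_append_none {γ : Type} {l : List γ} {p : γ} {q : γ → Bool}
    (h : l.findIdx? q = none) :
    List.findIdx? q (l ++ [p]) = if q p then some l.length else none := by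
  rw [List.findIdx?_append, h]
  rw [List.findIdx?_cons]
  by_cases h1 : q p
  · simp [h1, List.findIdx?_nil]
  · simp [h1, List.findIdx?_nil]

lemma tinColor_append (F : List (V × W)) (p : V × W) (x : V ⊕ W) :
    tinColor F x = (tinColor (F ++ [p]) x).bind
      (fun j => if j < F.length then some j else none) := by
  cases x with
  | inl u => exact findIdx?_append_single F p _
  | inr v => exact findIdx?_append_single F p _

lemma tinRel_append [Fintype V] [Fintype W] {G : SimpleGraph V} {H : SimpleGraph W}
    {F : List (V × W)} {p : V × W} {x y : V ⊕ W}
    (h : tinRel G H (F ++ [p]) x y) : tinRel G H F x y := by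
  intro i
  refine crRel_coarsen (G ⊕g H) (c := tinColor F) (c' := tinColor (F ++ [p])) ?_ i (h i)
  intro a b hab
  rw [tinColor_append F p a, tinColor_append F p b, hab]

lemma tinColor_some_inj_left {F : List (V × W)} {u u' : V} {j : ℕ}
    (h : tinColor F (Sum.inl u) = some j) (h' : tinColor F (Sum.inl u') = some j) : u = u' := by
  obtain ⟨a, ha, hqa⟩ := findIdx?_spec F _ j h
  obtain ⟨a', ha', hqa'⟩ := findIdx?_spec F _ j h'
  rw [ha] at ha'
  obtain rfl : a = a' := Option.some.inj ha'
  have h1 : a.1 = u := by simpa using hqa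
  have h2 : a.1 = u' := by simpa using hqa'
  rw [← h1, h2]

lemma tinColor_some_inj_right {F : List (V × W)} {v v' : W} {j : ℕ}
    (h : tinColor F (Sum.inr v) = some j) (h' : tinColor F (Sum.inr v') = some j) : v = v' := by
  obtain ⟨a, ha, hqa⟩ := findIdx?_spec F _ j h
  obtain ⟨a', ha', hqa'⟩ := findIdx?_spec F _ j h'
  rw [ha] at ha'
  obtain rfl : a = a' := Option.some.inj ha'
  have h1 : a.2 = v := by simpa using hqa
  have h2 : a.2 = v' := by simpa using hqa'
  rw [← h1, h2]

/-- after appending `(u', v')`, vertex `inl u'` (if previously uncolored) gets a fresh color -/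
lemma tinColor_append_self_left {F : List (V × W)} {u' : V} (v' : W)
    (h : tinColor F (Sum.inl u') = none) :
    tinColor (F ++ [(u', v')]) (Sum.inl u') = some F.length := by
  show List.findIdx? _ (F ++ [(u', v')]) = _
  rw [findIdx?_append_none h]
  simp

lemma tinColor_append_other_left {F : List (V × W)} {u' u'' : V} (v' : W)
    (h : tinColor F (Sum.inl u'') = none) (hne : u' ≠ u'') :
    tinColor (F ++ [(u', v')]) (Sum.inl u'') = none := by
  show List.findIdx? _ (F ++ [(u', v')]) = _
  rw [findIdx?_append_none h]
  simp [hne]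

lemma tinColor_append_self_right {F : List (V × W)} (u' : V) {v' : W}
    (h : tinColor F (Sum.inr v') = none) :
    tinColor (F ++ [(u', v')]) (Sum.inr v') = some F.length := by
  show List.findIdx? _ (F ++ [(u', v')]) = _
  rw [findIdx?_append_none h]
  simp

lemma tinColor_append_other_right {F : List (V × W)} (u' : V) {v' v'' : W}
    (h : tinColor F (Sum.inr v'') = none) (hne : v' ≠ v'') :
    tinColor (F ++ [(u', v')]) (Sum.inr v'') = none := by
  show List.findIdx? _ (F ++ [(u', v')]) = _
  rw [findIdx?_append_none h]
  simp [hne]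

/-! ### Stage 4: termination measure and run extension -/

def tinSetoid (G : SimpleGraph V) (H : SimpleGraph W) (F : List (V × W)) : Setoid (V ⊕ W) :=
  ⟨tinRel G H F, stableRel_equivalence _ _⟩

open scoped Classical

noncomputable def nclasses [Fintype V] [Fintype W] (G : SimpleGraph V) (H : SimpleGraph W)
    (F : List (V × W)) : ℕ :=
  Fintype.card (Quotient (tinSetoid G H F))

lemma nclasses_le [Fintype V] [Fintype W] (G : SimpleGraph V) (H : SimpleGraph W)
    (F : List (V × W)) : nclasses G H F ≤ Fintype.card (V ⊕ W) :=
  Fintype.card_le_of_surjective (Quotient.mk (tinSetoid G H F)) Quotient.exists_rep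

lemma nclasses_lt [Fintype V] [Fintype W] {G : SimpleGraph V} {H : SimpleGraph W}
    {F : List (V × W)} {p : V × W} {x y : V ⊕ W}
    (h1 : tinRel G H F x y) (h2 : ¬ tinRel G H (F ++ [p]) x y) :
    nclasses G H F < nclasses G H (F ++ [p]) := by
  let f : Quotient (tinSetoid G H (F ++ [p])) → Quotient (tinSetoid G H F) :=
    Quotient.lift (fun a => Quotient.mk (tinSetoid G H F) a)
      (fun a b hab => Quotient.sound (tinRel_append hab))
  have hsurj : Function.Surjective f := by
    intro q
    obtain ⟨a, rfl⟩ := Quotient.exists_rep q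
    exact ⟨Quotient.mk _ a, rfl⟩
  have hninj : ¬ Function.Injective f := by
    intro hinj
    apply h2
    have heq : (Quotient.mk (tinSetoid G H (F ++ [p])) x)
        = Quotient.mk (tinSetoid G H (F ++ [p])) y := by
      apply hinj
      show Quotient.mk (tinSetoid G H F) x = Quotient.mk (tinSetoid G H F) y
      exact Quotient.sound h1
    exact Quotient.exact heq
  exact Fintype.card_lt_of_surjective_not_injective f hsurj hninj

lemma allSingletons_of_max [Fintype V] [Fintype W] {G : SimpleGraph V} {H : SimpleGraph W}
    {F : List (V × W)} (hcard : Fintype.card (V ⊕ W) ≤ nclasses G H F) :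
    AllSingletons G H F := by
  have hsurj : Function.Surjective (Quotient.mk (tinSetoid G H F)) := Quotient.exists_rep
  have hbij : Function.Bijective (Quotient.mk (tinSetoid G H F)) :=
    (Fintype.bijective_iff_surjective_and_card _).2
      ⟨hsurj, le_antisymm hcard (nclasses_le G H F)⟩
  have hkey : ∀ x y : V ⊕ W, tinRel G H F x y → x = y := fun x y hxy =>
    hbij.1 (Quotient.sound hxy)
  exact ⟨fun u u' h => Sum.inl.inj (hkey _ _ h), fun v v' h => Sum.inr.inj (hkey _ _ h)⟩

lemma validRun_append {G : SimpleGraph V} {H : SimpleGraph W} {F : List (V × W)} {p : V × W}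
    (hF : ValidRun G H F) (hp : ValidStep G H F p) : ValidRun G H (F ++ [p]) := by
  intro j
  have hlen : (F ++ [p]).length = F.length + 1 := by simp
  by_cases hj : j.val < F.length
  · have h1 : (F ++ [p]).take j.val = F.take j.val := List.take_append_of_le_length hj.le
    have h2 : (F ++ [p]).get j = F.get ⟨j.val, hj⟩ := by
      simp [List.get_eq_getElem, List.getElem_append_left hj]
    rw [h1, h2]
    exact hF ⟨j.val, hj⟩
  · have hj' : j.val = F.length := by have := j.2; omega
    have h1 : (F ++ [p]).take j.val = F := by
      rw [hj', List.take_append_of_le_length le_rfl, List.take_length]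
    have h2 : (F ++ [p]).get j = p := by
      simp only [List.get_eq_getElem]
      rw [List.getElem_append_right hj'.ge]
      simp [hj']
    rw [h1, h2]
    exact hp

lemma two_le_ncard {s : Set V} {a b : V} (ha : a ∈ s) (hb : b ∈ s) (hab : a ≠ b)
    [Fintype V] : 2 ≤ s.ncard :=
  (Set.one_lt_ncard (Set.toFinite s)).2 ⟨a, ha, b, hb, hab⟩

/-- If the run is not finished, there is a valid next step which strictly refines. -/
lemma exists_step [Fintype V] [Fintype W] {G : SimpleGraph V} {H : SimpleGraph W}
    {F : List (V × W)} (hind : tinIndist G H F) (hns : ¬ AllSingletons G H F) :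
    ∃ p : V × W, ValidStep G H F p ∧
      ∃ x y, tinRel G H F x y ∧ ¬ tinRel G H (F ++ [p]) x y := by
  have eqv := stableRel_equivalence (G ⊕g H) (tinColor F)
  rw [AllSingletons, not_and_or] at hns
  rcases hns with hns | hns
  · push_neg at hns
    obtain ⟨u', u'', hrel, hne⟩ := hns
    -- the class of inl u' has ≥ 2 elements
    have hrel' : tinRel G H F (Sum.inl u'') (Sum.inl u') := eqv.symm hrel
    have h2l : 2 ≤ {x : V | tinRel G H F (Sum.inl x) (Sum.inl u')}.ncard := by
      refine two_le_ncard (a := u') (b := u'') ?_ ?_ hne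
      · show tinRel G H F (Sum.inl u') (Sum.inl u'); exact eqv.refl _
      · exact hrel'
    have h2r : 0 < {y : W | tinRel G H F (Sum.inr y) (Sum.inl u')}.ncard := by
      have hh := hind (Sum.inl u'); omega
    obtain ⟨v', hv'⟩ := Set.nonempty_of_ncard_ne_zero
      (s := {y : W | tinRel G H F (Sum.inr y) (Sum.inl u')}) (by omega)
    have hv' : tinRel G H F (Sum.inr v') (Sum.inl u') := hv'
    have hv'' : tinRel G H F (Sum.inl u') (Sum.inr v') := eqv.symm hv'
    refine ⟨(u', v'), ⟨hind, hv'', h2l, ?_⟩, Sum.inl u', Sum.inl u'', hrel, ?_⟩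
    · -- inr class of v' has ≥ 2 elements
      have hseteq : {x : V | tinRel G H F (Sum.inl x) (Sum.inr v')}
          = {x : V | tinRel G H F (Sum.inl x) (Sum.inl u')} := by
        ext x
        exact ⟨fun hx => eqv.trans hx hv', fun hx => eqv.trans hx (eqv.symm hv')⟩
      have hh := hind (Sum.inr v')
      rw [hseteq] at hh
      show 2 ≤ {y : W | tinRel G H F (Sum.inr y) (Sum.inr v')}.ncard
      omega
    · -- separation
      intro hcontra
      have h0 := hcontra 0
      have hold : tinColor F (Sum.inl u') = tinColor F (Sum.inl u'') := hrel 0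
      have hnone : tinColor F (Sum.inl u') = none := by
        cases hcol : tinColor F (Sum.inl u') with
        | none => rfl
        | some j =>
          exact absurd (tinColor_some_inj_left hcol (hold ▸ hcol)) hne
      have hnew1 : tinColor (F ++ [(u', v')]) (Sum.inl u') = some F.length :=
        tinColor_append_self_left v' hnone
      have hnew2 : tinColor (F ++ [(u', v')]) (Sum.inl u'') = none :=
        tinColor_append_other_left v' (hold ▸ hnone) hne
      have : tinColor (F ++ [(u', v')]) (Sum.inl u')
          = tinColor (F ++ [(u', v')]) (Sum.inl u'') := h0
      rw [hnew1, hnew2] at this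
      exact Option.some_ne_none _ this
  · push_neg at hns
    obtain ⟨v', v'', hrel, hne⟩ := hns
    have hrel' : tinRel G H F (Sum.inr v'') (Sum.inr v') := eqv.symm hrel
    have h2r : 2 ≤ {y : W | tinRel G H F (Sum.inr y) (Sum.inr v')}.ncard := by
      refine two_le_ncard (a := v') (b := v'') ?_ ?_ hne
      · show tinRel G H F (Sum.inr v') (Sum.inr v'); exact eqv.refl _
      · exact hrel'
    have h2l : 0 < {x : V | tinRel G H F (Sum.inl x) (Sum.inr v')}.ncard := by
      have hh := hind (Sum.inr v'); omega
    obtain ⟨u', hu'⟩ := Set.nonempty_of_ncard_ne_zero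
      (s := {x : V | tinRel G H F (Sum.inl x) (Sum.inr v')}) (by omega)
    have hu' : tinRel G H F (Sum.inl u') (Sum.inr v') := hu'
    refine ⟨(u', v'), ⟨hind, hu', ?_, h2r⟩, Sum.inr v', Sum.inr v'', hrel, ?_⟩
    · have hseteq : {x : V | tinRel G H F (Sum.inl x) (Sum.inl u')}
          = {x : V | tinRel G H F (Sum.inl x) (Sum.inr v')} := by
        ext x
        exact ⟨fun hx => eqv.trans hx hu', fun hx => eqv.trans hx (eqv.symm hu')⟩
      show 2 ≤ {x : V | tinRel G H F (Sum.inl x) (Sum.inl u')}.ncard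
      rw [hseteq, hind (Sum.inr v')]
      omega
    · intro hcontra
      have h0 := hcontra 0
      have hold : tinColor F (Sum.inr v') = tinColor F (Sum.inr v'') := hrel 0
      have hnone : tinColor F (Sum.inr v') = none := by
        cases hcol : tinColor F (Sum.inr v') with
        | none => rfl
        | some j =>
          exact absurd (tinColor_some_inj_right hcol (hold ▸ hcol)) hne
      have hnew1 : tinColor (F ++ [(u', v')]) (Sum.inr v') = some F.length :=
        tinColor_append_self_right u' hnone
      have hnew2 : tinColor (F ++ [(u', v')]) (Sum.inr v'') = none :=
        tinColor_append_other_right u' (hold ▸ hnone) hne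
      have : tinColor (F ++ [(u', v')]) (Sum.inr v')
          = tinColor (F ++ [(u', v')]) (Sum.inr v'') := h0
      rw [hnew1, hnew2] at this
      exact Option.some_ne_none _ this

lemma run_extend [Fintype V] [Fintype W] (G : SimpleGraph V) (H : SimpleGraph W) :
    ∀ (n : ℕ) (F : List (V × W)), ValidRun G H F →
      Fintype.card (V ⊕ W) ≤ nclasses G H F + n →
      ∃ F', ValidRun G H (F ++ F') ∧ TinTerminal G H (F ++ F') := by
  intro n
  induction n with
  | zero =>
    intro F hrun hcard
    exact ⟨[], by simpa using hrun,
      Or.inr (allSingletons_of_max (by simpa using hcard))⟩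
  | succ n ih =>
    intro F hrun hcard
    by_cases hterm : TinTerminal G H F
    · exact ⟨[], by simpa using hrun, by simpa using hterm⟩
    · have hind : tinIndist G H F := by
        by_contra hc; exact hterm (Or.inl hc)
      have hns : ¬ AllSingletons G H F := fun hs => hterm (Or.inr hs)
      obtain ⟨p, hstep, x, y, hxy, hsep⟩ := exists_step hind hns
      have hlt : nclasses G H F < nclasses G H (F ++ [p]) := nclasses_lt hxy hsep
      obtain ⟨F'', h1, h2⟩ := ih (F ++ [p]) (validRun_append hrun hstep) (by omega)
      refine ⟨p :: F'', ?_, ?_⟩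
      · rwa [← List.singleton_append, ← List.append_assoc]
      · rwa [← List.singleton_append, ← List.append_assoc]

/-! ### Stage 5: assembly -/

lemma tinColor_cons_self_left (F : List (V × W)) (a : V) (b : W) :
    tinColor ((a, b) :: F) (Sum.inl a) = some 0 := by
  show List.findIdx? _ _ = _
  rw [List.findIdx?_cons]
  simp

lemma tinColor_cons_zero_right {F : List (V × W)} {a : V} {b : W} {y : W}
    (h : tinColor ((a, b) :: F) (Sum.inr y) = some 0) : y = b := by
  revert h
  show List.findIdx? _ _ = _ → _
  rw [List.findIdx?_cons]
  by_cases h1 : ((a, b).2 = y)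
  · intro _; exact h1.symm
  · rw [if_neg (fun hc => h1 (by simpa using hc))]
    intro hmap
    obtain ⟨k, _, hk0⟩ := Option.map_eq_some_iff.1 hmap
    omega

theorem tinhofer_refinable' {V : Type} [Fintype V] (G : SimpleGraph V)
    (h : Tinhofer G) : Refinable G := by
  intro u v
  constructor
  · intro hs
    by_cases huv : u = v
    · exact ⟨1, fun a b => by simp, by simp [huv]⟩
    have hswapc : ∀ x : V ⊕ V,
        tinColor ([] : List (V × V)) (Equiv.sumComm V V x) = tinColor [] x := by
      intro x; rw [tinColor_nil, tinColor_nil]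
    have hmirror : ∀ (i : ℕ) (a : V),
        crRel (G ⊕g G) (tinColor ([] : List (V × V))) i (Sum.inl a) (Sum.inr a) :=
      fun i a => crRel_sum_swap G _ hswapc i a
    have hrel0 : tinRel G G [] (Sum.inl u) (Sum.inl v) := by
      intro i
      exact (tinRel_nil_congr G G i _ _).2 ((crRel_sum_inl G i u v).2 (hs i))
    have eqv0 := stableRel_equivalence (G ⊕g G) (tinColor ([] : List (V × V)))
    have hindnil : tinIndist G G [] := by
      intro w
      have hseteq : {u' : V | tinRel G G [] (Sum.inl u') w}
          = {v' : V | tinRel G G [] (Sum.inr v') w} := by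
        ext x
        simp only [Set.mem_setOf_eq]
        constructor
        · intro hx i
          exact crRel_trans _ _ i (crRel_symm _ _ i (hmirror i x)) (hx i)
        · intro hx i
          exact crRel_trans _ _ i (hmirror i x) (hx i)
      rw [hseteq]
    have hvstep : ValidStep G G [] (u, v) := by
      refine ⟨hindnil, ?_, ?_, ?_⟩
      · show tinRel G G [] (Sum.inl u) (Sum.inr v)
        intro i
        exact crRel_trans _ _ i (hrel0 i) (hmirror i v)
      · show 2 ≤ {u' : V | tinRel G G [] (Sum.inl u') (Sum.inl u)}.ncard
        refine two_le_ncard (a := u) (b := v) ?_ ?_ huv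
        · show tinRel G G [] (Sum.inl u) (Sum.inl u); exact eqv0.refl _
        · show tinRel G G [] (Sum.inl v) (Sum.inl u); exact eqv0.symm hrel0
      · show 2 ≤ {v' : V | tinRel G G [] (Sum.inr v') (Sum.inr v)}.ncard
        have hseteq : {v' : V | tinRel G G [] (Sum.inr v') (Sum.inr v)}
            = {u' : V | tinRel G G [] (Sum.inl u') (Sum.inl u)} := by
          ext x
          simp only [Set.mem_setOf_eq]
          constructor
          · intro hx i
            exact crRel_trans _ _ i (crRel_trans _ _ i (hmirror i x)
              (hx i)) (crRel_symm _ _ i (crRel_trans _ _ i (hrel0 i) (hmirror i v)))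
          · intro hx i
            exact crRel_trans _ _ i (crRel_symm _ _ i (hmirror i x))
              (crRel_trans _ _ i (hx i) (crRel_trans _ _ i (hrel0 i) (hmirror i v)))
        rw [hseteq]
        refine two_le_ncard (a := u) (b := v) ?_ ?_ huv
        · show tinRel G G [] (Sum.inl u) (Sum.inl u); exact eqv0.refl _
        · show tinRel G G [] (Sum.inl v) (Sum.inl u); exact eqv0.symm hrel0
    have hrun1 : ValidRun G G [(u, v)] := by
      intro j
      have hj : j.val = 0 := by
        have h2 := j.2
        have hl : ([(u, v)] : List (V × V)).length = 1 := rfl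
        omega
      have h1 : ([(u, v)] : List (V × V)).take j.val = [] := by rw [hj]; rfl
      have h2 : ([(u, v)] : List (V × V)).get j = (u, v) := by
        have : j = ⟨0, by simp⟩ := Fin.ext hj
        rw [this]
        rfl
      rw [h1, h2]
      exact hvstep
    obtain ⟨F', hrunf, htermf⟩ := run_extend G G (Fintype.card (V ⊕ V)) [(u, v)]
      hrun1 (Nat.le_add_left _ _)
    rw [List.singleton_append] at hrunf htermf
    have hout : TinOutputIso G G ((u, v) :: F') :=
      (h V ‹Fintype V› G ((u, v) :: F') hrunf htermf).2 ⟨SimpleGraph.Iso.refl⟩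
    obtain ⟨hindf, hsingf, hadjf⟩ := hout
    have eqvf := stableRel_equivalence (G ⊕g G) (tinColor ((u, v) :: F'))
    have hmatch : ∀ a : V, ∃ y : V, tinRel G G ((u, v) :: F') (Sum.inr y) (Sum.inl a) := by
      intro a
      have hcl : {x : V | tinRel G G ((u, v) :: F') (Sum.inl x) (Sum.inl a)} = {a} := by
        ext x
        simp only [Set.mem_setOf_eq, Set.mem_singleton_iff]
        refine ⟨fun hx => hsingf.1 x a hx, fun hx => ?_⟩
        subst hx
        show tinRel G G ((u, v) :: F') (Sum.inl x) (Sum.inl x)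
        exact eqvf.refl _
      have h1 := hindf (Sum.inl a)
      rw [hcl, Set.ncard_singleton] at h1
      obtain ⟨y, hy⟩ := Set.nonempty_of_ncard_ne_zero
        (s := {y : V | tinRel G G ((u, v) :: F') (Sum.inr y) (Sum.inl a)}) (by omega)
      exact ⟨y, hy⟩
    choose σf hσf using hmatch
    have hinj : Function.Injective σf := by
      intro a b hab
      have h1 : tinRel G G ((u, v) :: F') (Sum.inr (σf a)) (Sum.inl a) := hσf a
      have h2 : tinRel G G ((u, v) :: F') (Sum.inr (σf a)) (Sum.inl b) := hab ▸ hσf b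
      exact hsingf.1 a b (eqvf.trans (eqvf.symm h1) h2)
    have hbij := Finite.injective_iff_bijective.1 hinj
    refine ⟨Equiv.ofBijective σf hbij, ?_, ?_⟩
    · intro a b
      show G.Adj (σf a) (σf b) ↔ G.Adj a b
      exact (hadjf a b (σf a) (σf b) (eqvf.symm (hσf a)) (eqvf.symm (hσf b))).symm
    · show σf u = v
      have hcol := (hσf u) 0
      have hcol' : tinColor ((u, v) :: F') (Sum.inr (σf u))
          = tinColor ((u, v) :: F') (Sum.inl u) := hcol
      rw [tinColor_cons_self_left] at hcol'
      exact tinColor_cons_zero_right hcol'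
  · rintro ⟨σ, hσ, rfl⟩
    intro i
    exact (crRel_aut G (fun _ => (0 : ℕ)) σ hσ (fun _ => rfl) i).2 u


theorem tinhofer_refinable {V : Type} [Fintype V] (G : SimpleGraph V)
    (h : Tinhofer G) : Refinable G := by
  exact tinhofer_refinable' G h

end ColorRef
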